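/- arXiv:2005.13229 — 3 statements merged into one kernel-verified Lean document; each statement's English description precedes it below -/
import Mathlib

section
/- Let μ be a measure on a measurable space α, F a measurable set with μ F < ∞, and A : ℕ → Set α a sequence of measurable sets with A n ⊆ A (n+1) and A n ⊆ F for all n. Let c be a positive extended-nonnegative real, and suppose that for every n, if μ (A n) < μ F then c ≤ μ (A (n+1) \ A n). Then for every n ∈ ℕ, min (μ (A 0) + n·c, μ F) ≤ μ (A n). (Quantitative form of the growth argument in the paper's Lemma 2: the measure of the iterated visibility sets grows linearly at rate at least c until it reaches μ(X_free).) -/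
open MeasureTheory ENNReal

/-- Quantitative form of the growth argument in the paper's Lemma 2: the measure of
the iterated visibility sets grows linearly at rate at least `c` until it reaches
the measure of the free space `F`. -/
theorem visibility_measure_linear_growth {α : Type*} [MeasurableSpace α] (μ : Measure α)
    (F : Set α) (hFmeas : MeasurableSet F) (hFfin : μ F < ⊤)
    (A : ℕ → Set α) (hAmeas : ∀ n, MeasurableSet (A n))
    (hmono : ∀ n, A n ⊆ A (n + 1)) (hsub : ∀ n, A n ⊆ F)
    (c : ℝ≥0∞) (hc : 0 < c)
    (hgrow : ∀ n, μ (A n) < μ F → c ≤ μ (A (n + 1) \ A n)) :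
    ∀ n : ℕ, min (μ (A 0) + n * c) (μ F) ≤ μ (A n) := by
  intro n
  induction n with
  | zero => simp
  | succ n ih =>
    by_cases h : μ (A n) < μ F
    · have hstep : μ (A n) + c ≤ μ (A (n + 1)) := by
        have hu : μ (A (n + 1) \ A n ∪ A n) = μ (A (n + 1) \ A n) + μ (A n) :=
          measure_union Set.disjoint_sdiff_left (hAmeas n)
        rw [Set.diff_union_of_subset (hmono n)] at hu
        rw [hu, add_comm]
        gcongr
        exact hgrow n h
      have hcast : μ (A 0) + ↑(n + 1) * c = (μ (A 0) + n * c) + c := by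
        push_cast; ring
      calc min (μ (A 0) + ↑(n + 1) * c) (μ F)
          ≤ min (μ (A 0) + n * c) (μ F) + c := by
            rw [hcast, ← min_add_add_right]
            exact min_le_min_left _ le_self_add
        _ ≤ μ (A n) + c := add_le_add_left ih c
        _ ≤ μ (A (n + 1)) := hstep
    · have h' : μ F ≤ μ (A n) := not_lt.mp h
      exact le_trans (min_le_right _ _)
        (le_trans h' (measure_mono (hmono n)))
end

section
/- Let μ be a measure on a measurable space α, F a measurable set with μ F < ∞, and A : ℕ → Set α a sequence of measurable sets with A n ⊆ A (n+1) and A n ⊆ F for all n. Let c be a positive extended-nonnegative real, and suppose that for every n, if μ (A n) < μ F then c ≤ μ (A (n+1) \ A n). Then every n ∈ ℕ with μ F ≤ n·c satisfies μ (A n) = μ F; in particular the sensing-restricted visibility index q = argmin{ i | μ(A i) = μ F } is at most any n with n·c ≥ μ F. (Explicit bound on the visibility index q of Eq. (10).) -/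
open MeasureTheory ENNReal

/-- Explicit bound on the sensing-restricted visibility index `q` of Eq. (10):
after any number `n` of steps with `n * c ≥ μ F`, the measure of the iterated
visibility set equals that of the free space; in particular the visibility index
`q = sInf { i | μ (A i) = μ F }` is at most any such `n`. -/
theorem visibility_index_bound {α : Type*} [MeasurableSpace α] (μ : Measure α)
    (F : Set α) (hFmeas : MeasurableSet F) (hFfin : μ F < ⊤)
    (A : ℕ → Set α) (hAmeas : ∀ n, MeasurableSet (A n))
    (hmono : ∀ n, A n ⊆ A (n + 1)) (hsub : ∀ n, A n ⊆ F)
    (c : ℝ≥0∞) (hc : 0 < c)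
    (hgrow : ∀ n, μ (A n) < μ F → c ≤ μ (A (n + 1) \ A n)) :
    (∀ n : ℕ, μ F ≤ n * c → μ (A n) = μ F) ∧
      ∀ n : ℕ, μ F ≤ n * c → sInf {i : ℕ | μ (A i) = μ F} ≤ n := by
  have key : ∀ n : ℕ, μ (A n) = μ F ∨ (n : ℝ≥0∞) * c ≤ μ (A n) := by
    intro n
    induction n with
    | zero => right; simp
    | succ n ih =>
      rcases ih with h | h
      · left
        refine le_antisymm (measure_mono (hsub _)) ?_
        rw [← h]; exact measure_mono (hmono n)
      · rcases eq_or_lt_of_le (measure_mono (hsub n) : μ (A n) ≤ μ F) with heq | hlt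
        · left
          refine le_antisymm (measure_mono (hsub _)) ?_
          rw [← heq]; exact measure_mono (hmono n)
        · right
          have hsplit : μ (A (n + 1)) = μ (A n) + μ (A (n + 1) \ A n) := by
            rw [← measure_union' disjoint_sdiff_self_right (hAmeas n),
              Set.union_diff_cancel (hmono n)]
          rw [hsplit]
          push_cast
          rw [add_mul, one_mul]
          exact add_le_add h (hgrow n hlt)
  have main : ∀ n : ℕ, μ F ≤ n * c → μ (A n) = μ F := by
    intro n hn
    rcases key n with h | h
    · exact h
    · exact le_antisymm (measure_mono (hsub n)) (le_trans hn h)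
  exact ⟨main, fun n hn => Nat.sInf_le (main n hn)⟩
end

section
/- Let (Ω, P) be a probability space, N ∈ ℕ, and X₁, …, X_N independent random variables on Ω each taking values in {0,1}. Let p be a real number with 0 ≤ p ≤ 1 such that p ≤ P(Xᵢ = 1) for every i. Then for every q ∈ ℕ, P(∑_{i=1}^{N} Xᵢ < q) ≤ T(N, p, q) = ∑_{k=0}^{q-1} (N choose k) p^k (1-p)^{N-k}. (Paper's Proposition 2: the probability that the sum A = A₁+⋯+A_N of the per-iteration progress indicators is less than q is bounded by the corresponding lower tail of a Binomial(N,p) variable B = B₁+⋯+B_N.) -/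
open MeasureTheory ProbabilityTheory

/-- The lower tail of the binomial distribution `Bin(N, p)` strictly below `q`. -/
noncomputable def binomialLowerTail (N : ℕ) (p : ℝ) (q : ℕ) : ℝ :=
  ∑ k ∈ Finset.range q, (N.choose k : ℝ) * p ^ k * (1 - p) ^ (N - k)

open scoped ENNReal

lemma binomialLowerTail_nonneg (N : ℕ) {p : ℝ} (hp0 : 0 ≤ p) (hp1 : p ≤ 1) (q : ℕ) :
    0 ≤ binomialLowerTail N p q :=
  Finset.sum_nonneg fun k _ => mul_nonneg (mul_nonneg (Nat.cast_nonneg _) (pow_nonneg hp0 _))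
    (pow_nonneg (by linarith) _)

lemma binomialLowerTail_pascal (N q : ℕ) (p : ℝ) :
    binomialLowerTail (N+1) p (q+1)
      = p * binomialLowerTail N p q + (1 - p) * binomialLowerTail N p (q+1) := by
  induction q with
  | zero => simp [binomialLowerTail]; ring
  | succ q ih =>
    have expand : ∀ (M r : ℕ), binomialLowerTail M p (r+1)
        = binomialLowerTail M p r + (M.choose r : ℝ) * p ^ r * (1 - p) ^ (M - r) := by
      intro M r; simp [binomialLowerTail, Finset.sum_range_succ]
    rw [expand (N+1) (q+1), expand N q, expand N (q+1), ih]
    have hsucc : ((N+1).choose (q+1) : ℝ) = (N.choose q : ℝ) + (N.choose (q+1) : ℝ) := by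
      rw [Nat.choose_succ_succ]; push_cast; ring
    by_cases h : q < N
    · have h1 : N - q = (N - (q+1)) + 1 := by omega
      have h2 : N + 1 - (q + 1) = N - q := by omega
      rw [h2, hsucc, h1]; ring
    · have h0 : N.choose (q+1) = 0 := Nat.choose_eq_zero_of_lt (by omega)
      have h2 : N + 1 - (q + 1) = N - q := by omega
      rw [h2, hsucc, h0]; push_cast; ring

lemma iIndepFun_castSucc {Ω : Type*} [MeasurableSpace Ω] {P : Measure Ω} {N : ℕ}
    {X : Fin (N+1) → Ω → ℕ}
    (h : iIndepFun X P) :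
    iIndepFun (fun i : Fin N => X i.castSucc) P := by
  classical
  rw [iIndepFun_iff_measure_inter_preimage_eq_mul] at h ⊢
  intro S sets _
  set F : Fin (N+1) → Set ℕ := fun j =>
    if hj : j = Fin.last N then Set.univ else sets (j.castPred hj) with hF
  have key := h (S.image Fin.castSucc) (sets := F) (fun i _ => .of_discrete)
  have hinj : Function.Injective (Fin.castSucc : Fin N → Fin (N+1)) :=
    Fin.castSucc_injective N
  have hFc : ∀ i : Fin N, F i.castSucc = sets i := by
    intro i
    have : (i.castSucc : Fin (N+1)) ≠ Fin.last N := (Fin.castSucc_lt_last i).ne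
    simp [hF, this]
  rw [Finset.set_biInter_finset_image, Finset.prod_image (fun a _ b _ hab => hinj hab)] at key
  simpa [hFc] using key

lemma ennreal_interp {r p' a b : ℝ≥0∞} (hr1 : r ≤ 1) (hpr : p' ≤ r) (hab : a ≤ b) :
    r * a + (1 - r) * b ≤ p' * a + (1 - p') * b := by
  have hb : (1 - r) * b = (1 - r) * a + (1 - r) * (b - a) := by
    rw [← mul_add, add_tsub_cancel_of_le hab]
  have hb' : (1 - p') * b = (1 - p') * a + (1 - p') * (b - a) := by
    rw [← mul_add, add_tsub_cancel_of_le hab]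
  rw [hb, hb', ← add_assoc, ← add_assoc, ← add_mul, ← add_mul,
    add_tsub_cancel_of_le hr1, add_tsub_cancel_of_le (hpr.trans hr1)]
  exact add_le_add_right (mul_le_mul_left (tsub_le_tsub_left hpr 1) _) _

/-- Paper's Proposition 2: if `X₁, …, X_N` are independent `{0,1}`-valued random
variables whose success probabilities are each at least `p`, then the probability
that their sum is less than `q` is at most the lower tail of a `Binomial(N, p)`
random variable below `q`. -/
theorem prob_sum_lt_le_binomialLowerTail
    {Ω : Type*} [MeasurableSpace Ω] (P : Measure Ω) [IsProbabilityMeasure P]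
    (N : ℕ) (X : Fin N → Ω → ℕ)
    (hXmeas : ∀ i, Measurable (X i))
    (hX01 : ∀ i ω, X i ω ≤ 1)
    (hindep : iIndepFun X P)
    (p : ℝ) (hp0 : 0 ≤ p) (hp1 : p ≤ 1)
    (hplb : ∀ i, ENNReal.ofReal p ≤ P {ω | X i ω = 1})
    (q : ℕ) :
    P {ω | ∑ i, X i ω < q} ≤ ENNReal.ofReal (binomialLowerTail N p q) := by
  induction N generalizing q with
  | zero =>
    cases q with
    | zero => simp
    | succ q =>
      have hset : {ω : Ω | ∑ i : Fin 0, X i ω < q + 1} = Set.univ := by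
        ext ω; simp
      have hT : binomialLowerTail 0 p (q+1) = 1 + binomialLowerTail 0 p q * 0 := by
        simp [binomialLowerTail]
        rw [Finset.sum_eq_single 0]
        · simp
        · intro k _ hk; simp [Nat.choose_eq_zero_of_lt (Nat.pos_of_ne_zero hk)]
        · simp
      rw [hset, hT]
      simp [measure_univ]
  | succ n ih =>
    cases q with
    | zero => simp
    | succ q =>
      set S : Ω → ℕ := fun ω => ∑ i : Fin n, X i.castSucc ω with hS
      set Y : Ω → ℕ := X (Fin.last n) with hY
      -- sum decomposition
      have hsum : ∀ ω, ∑ i, X i ω = S ω + Y ω := by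
        intro ω; rw [hS]; exact Fin.sum_univ_castSucc fun i => X i ω
      have hset : {ω | ∑ i, X i ω < q + 1}
          = ({ω | Y ω = 1} ∩ {ω | S ω < q}) ∪ ({ω | Y ω = 0} ∩ {ω | S ω < q + 1}) := by
        ext ω
        have h01 : Y ω ≤ 1 := hX01 (Fin.last n) ω
        simp only [Set.mem_setOf_eq, Set.mem_union, Set.mem_inter_iff, hsum ω]
        omega
      -- independence of S and Y
      have hSfun : (∑ j ∈ Finset.univ.erase (Fin.last n), X j) = S := by
        funext ω
        have h1 : ∑ j ∈ Finset.univ.erase (Fin.last n), X j ω + X (Fin.last n) ω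
            = ∑ j, X j ω := Finset.sum_erase_add _ _ (Finset.mem_univ _)
        have h2 := hsum ω
        have hYd : Y ω = X (Fin.last n) ω := rfl
        have h3 : (∑ j ∈ Finset.univ.erase (Fin.last n), X j) ω
            = ∑ j ∈ Finset.univ.erase (Fin.last n), X j ω := by
          simp [Finset.sum_apply]
        omega
      have hSY : IndepFun S Y P := by
        rw [← hSfun, hY]
        exact hindep.indepFun_finsetSum_of_notMem hXmeas (Finset.notMem_erase _ _)
      have hmul : ∀ (s t : Set ℕ), P (S ⁻¹' s ∩ Y ⁻¹' t) = P (S ⁻¹' s) * P (Y ⁻¹' t) :=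
        fun s t => hSY.measure_inter_preimage_eq_mul s t .of_discrete .of_discrete
      -- probabilities
      set r : ℝ≥0∞ := P {ω | Y ω = 1} with hr
      set a : ℝ≥0∞ := P {ω | S ω < q} with ha
      set b : ℝ≥0∞ := P {ω | S ω < q + 1} with hb
      have hr1 : r ≤ 1 := prob_le_one
      have hcompl : {ω | Y ω = 0} = {ω | Y ω = 1}ᶜ := by
        ext ω; have h01 : Y ω ≤ 1 := hX01 (Fin.last n) ω; simp only [Set.mem_compl_iff, Set.mem_setOf_eq]; omega
      have hY0 : P {ω | Y ω = 0} = 1 - r := by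
        have hm : MeasurableSet {ω | Y ω = 1} := by
          exact hXmeas (Fin.last n) (MeasurableSet.of_discrete (s := {1}))
        rw [hcompl, measure_compl hm (measure_ne_top _ _), measure_univ]
      have e1 : P ({ω | Y ω = 1} ∩ {ω | S ω < q}) = r * a := by
        have : {ω | Y ω = 1} ∩ {ω | S ω < q} = S ⁻¹' {m | m < q} ∩ Y ⁻¹' {1} := by
          ext ω; simp [Set.mem_inter_iff, and_comm]
        rw [this, hmul]; rw [mul_comm]; rfl
      have e2 : P ({ω | Y ω = 0} ∩ {ω | S ω < q + 1}) = (1 - r) * b := by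
        have : {ω | Y ω = 0} ∩ {ω | S ω < q + 1} = S ⁻¹' {m | m < q + 1} ∩ Y ⁻¹' {0} := by
          ext ω; simp [Set.mem_inter_iff, and_comm]
        rw [this, hmul, mul_comm, ← hY0]; rfl
      have hboundP : P {ω | ∑ i, X i ω < q + 1} ≤ r * a + (1 - r) * b := by
        rw [hset]
        exact (measure_union_le _ _).trans (by rw [e1, e2])
      -- apply IH
      have hmeas' : ∀ i : Fin n, Measurable (fun ω => X i.castSucc ω) := fun i => hXmeas _
      have hIH1 : a ≤ ENNReal.ofReal (binomialLowerTail n p q) :=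
        ih (fun i => X i.castSucc) hmeas' (fun i ω => hX01 _ ω) (iIndepFun_castSucc hindep)
          (fun i => hplb _) q
      have hIH2 : b ≤ ENNReal.ofReal (binomialLowerTail n p (q+1)) :=
        ih (fun i => X i.castSucc) hmeas' (fun i ω => hX01 _ ω) (iIndepFun_castSucc hindep)
          (fun i => hplb _) (q+1)
      have hab : a ≤ b := measure_mono (fun ω hω => by
        simp only [Set.mem_setOf_eq] at hω ⊢; omega)
      set p' : ℝ≥0∞ := ENNReal.ofReal p with hp'
      have hpr : p' ≤ r := hplb _
      calc P {ω | ∑ i, X i ω < q + 1} ≤ r * a + (1 - r) * b := hboundP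
        _ ≤ p' * a + (1 - p') * b := ennreal_interp hr1 hpr hab
        _ ≤ p' * ENNReal.ofReal (binomialLowerTail n p q)
            + (1 - p') * ENNReal.ofReal (binomialLowerTail n p (q+1)) :=
          add_le_add (mul_le_mul_right hIH1 _) (mul_le_mul_right hIH2 _)
        _ = ENNReal.ofReal (binomialLowerTail (n+1) p (q+1)) := by
          have h1p : (1 : ℝ≥0∞) - p' = ENNReal.ofReal (1 - p) := by
            rw [ENNReal.ofReal_sub _ hp0, ENNReal.ofReal_one]
          rw [h1p, hp', ← ENNReal.ofReal_mul hp0, ← ENNReal.ofReal_mul (by linarith),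
            ← ENNReal.ofReal_add (mul_nonneg hp0 (binomialLowerTail_nonneg _ hp0 hp1 _))
              (mul_nonneg (by linarith) (binomialLowerTail_nonneg _ hp0 hp1 _)),
            binomialLowerTail_pascal]
end
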